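/- Let n ≥ 3 and d ≥ 0, and let G be a graph obtained from the complete graph K_n by 2-stretching d distinct vertices (each stretching replacing a vertex u by a path-hub gadget u₀, u₁, u₂ as in the definition of 2-stretching). Then the independence number of G equals d + 1. -/

import Mathlib

open SimpleGraph

/-- Vertices of a stretched clique obtained from `K_n` by 2-stretching the vertices in `D`:
`Sum.inl j` is the unstretched vertex `j ∉ D`, `Sum.inr (Sum.inl i)` is the hub vertex `i₀`
of a stretched index `i ∈ D`, and `Sum.inr (Sum.inr (i, ℓ))` is the wing vertex `i_{ℓ+1}`. -/
abbrev KVert (n : ℕ) (D : Finset (Fin n)) :=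
  {j : Fin n // j ∉ D} ⊕ ({i : Fin n // i ∈ D} ⊕ ({i : Fin n // i ∈ D} × Fin 2))

/-- Adjacency data of a stretched clique: unstretched vertices are pairwise adjacent,
each hub is adjacent exactly to its two wings, `W i ℓ j` records an edge between wing `i_{ℓ+1}`
and unstretched vertex `j`, and `X i ℓ i' ℓ'` records an edge between wings of distinct
stretched indices. -/
def KRel (n : ℕ) (D : Finset (Fin n))
    (W : {i : Fin n // i ∈ D} → Fin 2 → {j : Fin n // j ∉ D} → Prop)
    (X : {i : Fin n // i ∈ D} → Fin 2 → {i : Fin n // i ∈ D} → Fin 2 → Prop) :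
    KVert n D → KVert n D → Prop
  | Sum.inl _, Sum.inl _ => True
  | Sum.inr (Sum.inl i), Sum.inr (Sum.inr (i', _)) => i = i'
  | Sum.inr (Sum.inr (i, l)), Sum.inl j => W i l j
  | Sum.inr (Sum.inr (i, l)), Sum.inr (Sum.inr (i', l')) => i ≠ i' ∧ X i l i' l'
  | _, _ => False

/-- The stretched clique determined by the data `D, W, X`. -/
def KGraph (n : ℕ) (D : Finset (Fin n))
    (W : {i : Fin n // i ∈ D} → Fin 2 → {j : Fin n // j ∉ D} → Prop)
    (X : {i : Fin n // i ∈ D} → Fin 2 → {i : Fin n // i ∈ D} → Fin 2 → Prop) :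
    SimpleGraph (KVert n D) :=
  SimpleGraph.fromRel (KRel n D W X)

/-- The covering conditions coming from `A₁ ∪ A₂ = Γ(v)` in each 2-stretching:
every unstretched vertex is adjacent to some wing of every stretched index, and between
the wings of any two distinct stretched indices there is at least one edge. -/
def KCover (n : ℕ) (D : Finset (Fin n))
    (W : {i : Fin n // i ∈ D} → Fin 2 → {j : Fin n // j ∉ D} → Prop)
    (X : {i : Fin n // i ∈ D} → Fin 2 → {i : Fin n // i ∈ D} → Fin 2 → Prop) : Prop :=
  (∀ i j, W i 0 j ∨ W i 1 j) ∧
  (∀ i i', i ≠ i' → ∃ l l', X i l i' l' ∨ X i' l' i l)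

/-- Membership in the class `𝒦_{n,d}`: a graph obtained from `K_n` by
2-stretching `d` of its `n` vertices, up to isomorphism. -/
def InK (n d : ℕ) {V : Type*} (G : SimpleGraph V) : Prop :=
  ∃ (D : Finset (Fin n))
    (W : {i : Fin n // i ∈ D} → Fin 2 → {j : Fin n // j ∉ D} → Prop)
    (X : {i : Fin n // i ∈ D} → Fin 2 → {i : Fin n // i ∈ D} → Fin 2 → Prop),
      D.card = d ∧ KCover n D W X ∧ Nonempty (G ≃g KGraph n D W X)

/-- The independence (stability) number of a graph. -/
noncomputable def indepNum {W : Type*} [Fintype W] (G : SimpleGraph W) : ℕ :=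
  sSup {n | ∃ s : Finset W, ((↑s : Set W).Pairwise fun u w => ¬ G.Adj u w) ∧ s.card = n}

section Aux

variable {n : ℕ} {D : Finset (Fin n)}
  {W : {i : Fin n // i ∈ D} → Fin 2 → {j : Fin n // j ∉ D} → Prop}
  {X : {i : Fin n // i ∈ D} → Fin 2 → {i : Fin n // i ∈ D} → Fin 2 → Prop}

lemma kadj_iff (u w : KVert n D) :
    (KGraph n D W X).Adj u w ↔ u ≠ w ∧ (KRel n D W X u w ∨ KRel n D W X w u) :=
  SimpleGraph.fromRel_adj _ _ _

lemma adj_wing_unstr {i l j} (h : W i l j) :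
    (KGraph n D W X).Adj (Sum.inr (Sum.inr (i, l))) (Sum.inl j) := by
  rw [kadj_iff]
  exact ⟨by simp, Or.inl h⟩

lemma adj_hub_wing (i : {i : Fin n // i ∈ D}) (l : Fin 2) :
    (KGraph n D W X).Adj (Sum.inr (Sum.inl i)) (Sum.inr (Sum.inr (i, l))) := by
  rw [kadj_iff]
  exact ⟨by simp, Or.inl rfl⟩

lemma adj_wing_wing {i i' : {i : Fin n // i ∈ D}} {l l'} (h : i ≠ i')
    (hx : X i l i' l' ∨ X i' l' i l) :
    (KGraph n D W X).Adj (Sum.inr (Sum.inr (i, l))) (Sum.inr (Sum.inr (i', l'))) := by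
  rw [kadj_iff]
  refine ⟨by simp [h], ?_⟩
  rcases hx with hx | hx
  · exact Or.inl ⟨h, hx⟩
  · exact Or.inr ⟨h.symm, hx⟩

lemma not_adj_hub_hub (i i' : {i : Fin n // i ∈ D}) :
    ¬ (KGraph n D W X).Adj (Sum.inr (Sum.inl i)) (Sum.inr (Sum.inl i')) := by
  rw [kadj_iff]
  rintro ⟨-, h | h⟩ <;> exact h

lemma not_adj_hub_wing_ne {i i' : {i : Fin n // i ∈ D}} (h : i ≠ i') (l : Fin 2) :
    ¬ (KGraph n D W X).Adj (Sum.inr (Sum.inl i)) (Sum.inr (Sum.inr (i', l))) := by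
  rw [kadj_iff]
  rintro ⟨-, h' | h'⟩
  · exact h h'
  · exact h'

lemma not_adj_wing_wing_same (i : {i : Fin n // i ∈ D}) (l l' : Fin 2) :
    ¬ (KGraph n D W X).Adj (Sum.inr (Sum.inr (i, l))) (Sum.inr (Sum.inr (i, l'))) := by
  rw [kadj_iff]
  rintro ⟨-, ⟨h, -⟩ | ⟨h, -⟩⟩ <;> exact h rfl

lemma card_le_of_indep (hC : KCover n D W X) (s : Finset (KVert n D))
    (hs : (↑s : Set (KVert n D)).Pairwise fun u w => ¬ (KGraph n D W X).Adj u w) :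
    s.card ≤ D.card + 1 := by
  classical
  have key : ∀ u ∈ s, ∀ w ∈ s, (KGraph n D W X).Adj u w → False := by
    intro u hu w hw h
    rcases eq_or_ne u w with rfl | hne
    · exact h.ne rfl
    · exact hs hu hw hne h
  set g : KVert n D → ({i : Fin n // i ∈ D} ⊕ Unit) := fun v =>
    match v with
    | Sum.inl _ => Sum.inr ()
    | Sum.inr (Sum.inl i) => Sum.inl i
    | Sum.inr (Sum.inr (i, l)) =>
        if l = 1 ∧ (Sum.inr (Sum.inr (i, 0)) : KVert n D) ∈ s then Sum.inr () else Sum.inl i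
    with hgdef
  have hinj : Set.InjOn g ↑s := by
    rintro a ha b hb hab
    rw [Finset.mem_coe] at ha hb
    rcases a with j | i | ⟨i, l⟩ <;> rcases b with j' | i' | ⟨i', l'⟩
    · -- unstr / unstr
      by_contra hne
      exact key _ ha _ hb ((kadj_iff _ _).2 ⟨hne, Or.inl trivial⟩)
    · simp [hgdef] at hab
    · -- unstr / wing
      simp only [hgdef] at hab
      split_ifs at hab with h
      · obtain ⟨hl, h0⟩ := h
        subst hl
        rcases hC.1 i' j with hw | hw
        · exact absurd (adj_wing_unstr hw) (fun h' => key _ h0 _ ha h')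
        · exact absurd (adj_wing_unstr hw) (fun h' => key _ hb _ ha h')
    · simp [hgdef] at hab
    · -- hub / hub
      simp only [hgdef, Sum.inl.injEq] at hab
      subst hab; rfl
    · -- hub / wing
      simp only [hgdef] at hab
      split_ifs at hab with h
      simp only [Sum.inl.injEq] at hab
      subst hab
      exact absurd (adj_hub_wing _ l') (fun h' => key _ ha _ hb h')
    · -- wing / unstr
      simp only [hgdef] at hab
      split_ifs at hab with h
      · obtain ⟨hl, h0⟩ := h
        subst hl
        rcases hC.1 i j' with hw | hw
        · exact absurd (adj_wing_unstr hw) (fun h' => key _ h0 _ hb h')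
        · exact absurd (adj_wing_unstr hw) (fun h' => key _ ha _ hb h')
    · -- wing / hub
      simp only [hgdef] at hab
      split_ifs at hab with h
      simp only [Sum.inl.injEq] at hab
      subst hab
      exact absurd (adj_hub_wing _ l) (fun h' => key _ hb _ ha h')
    · -- wing / wing
      simp only [hgdef] at hab
      split_ifs at hab with h1 h2 h3
      · obtain ⟨hl, h0⟩ := h1
        obtain ⟨hl', h0'⟩ := h2
        subst hl; subst hl'
        rcases eq_or_ne i i' with rfl | hne
        · rfl
        · exfalso
          obtain ⟨ll, ll', hx⟩ := hC.2 i i' hne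
          have hmem : ∀ m : Fin 2, (Sum.inr (Sum.inr (i, m)) : KVert n D) ∈ s := by
            intro m; fin_cases m
            · exact h0
            · exact ha
          have hmem' : ∀ m : Fin 2, (Sum.inr (Sum.inr (i', m)) : KVert n D) ∈ s := by
            intro m; fin_cases m
            · exact h0'
            · exact hb
          exact key _ (hmem ll) _ (hmem' ll') (adj_wing_wing hne hx)
      · simp only [Sum.inl.injEq] at hab
        subst hab
        rcases eq_or_ne l l' with rfl | hll
        · rfl
        · exfalso
          fin_cases l <;> fin_cases l'
          · exact hll rfl
          · exact h3 ⟨rfl, ha⟩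
          · exact h1 ⟨rfl, hb⟩
          · exact hll rfl
  calc s.card ≤ (Finset.univ : Finset ({i : Fin n // i ∈ D} ⊕ Unit)).card :=
        Finset.card_le_card_of_injOn g (fun a _ => Finset.mem_univ _) hinj
    _ = D.card + 1 := by simp

lemma exists_indep (hn : 1 ≤ n) :
    ∃ s : Finset (KVert n D),
      ((↑s : Set (KVert n D)).Pairwise fun u w => ¬ (KGraph n D W X).Adj u w) ∧
      s.card = D.card + 1 := by
  classical
  rcases D.eq_empty_or_nonempty with hD | ⟨i₀, hi₀⟩
  · refine ⟨{Sum.inl ⟨⟨0, by omega⟩, by simp [hD]⟩}, ?_, by simp [hD]⟩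
    simp
  · set i0 : {i : Fin n // i ∈ D} := ⟨i₀, hi₀⟩ with hi0
    set s : Finset (KVert n D) :=
      ((Finset.univ.filter fun i : {i : Fin n // i ∈ D} => i ≠ i0).image
        fun i => (Sum.inr (Sum.inl i) : KVert n D)) ∪
      {Sum.inr (Sum.inr (i0, 0)), Sum.inr (Sum.inr (i0, 1))} with hsdef
    have hmem : ∀ u ∈ s, (∃ i, i ≠ i0 ∧ u = Sum.inr (Sum.inl i)) ∨
        u = Sum.inr (Sum.inr (i0, 0)) ∨ u = Sum.inr (Sum.inr (i0, 1)) := by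
      intro u hu
      simp only [hsdef, Finset.mem_union, Finset.mem_image, Finset.mem_filter,
        Finset.mem_univ, true_and, Finset.mem_insert, Finset.mem_singleton] at hu
      rcases hu with ⟨i, hi, rfl⟩ | h | h
      · exact Or.inl ⟨i, hi, rfl⟩
      · exact Or.inr (Or.inl h)
      · exact Or.inr (Or.inr h)
    refine ⟨s, ?_, ?_⟩
    · intro u hu w hw hne
      rw [Finset.mem_coe] at hu hw
      rcases hmem u hu with ⟨i, hi, rfl⟩ | rfl | rfl <;>
        rcases hmem w hw with ⟨i', hi', rfl⟩ | rfl | rfl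
      · exact not_adj_hub_hub i i'
      · exact not_adj_hub_wing_ne hi 0
      · exact not_adj_hub_wing_ne hi 1
      · exact fun h => not_adj_hub_wing_ne hi' 0 h.symm
      · exact not_adj_wing_wing_same i0 0 0
      · exact not_adj_wing_wing_same i0 0 1
      · exact fun h => not_adj_hub_wing_ne hi' 1 h.symm
      · exact not_adj_wing_wing_same i0 1 0
      · exact not_adj_wing_wing_same i0 1 1
    · have hdisj : Disjoint
          ((Finset.univ.filter fun i : {i : Fin n // i ∈ D} => i ≠ i0).image
            fun i => (Sum.inr (Sum.inl i) : KVert n D))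
          ({Sum.inr (Sum.inr (i0, 0)), Sum.inr (Sum.inr (i0, 1))} : Finset (KVert n D)) := by
        rw [Finset.disjoint_left]
        intro x hx hx'
        simp only [Finset.mem_image] at hx
        obtain ⟨i, -, rfl⟩ := hx
        simp at hx'
      rw [hsdef, Finset.card_union_of_disjoint hdisj,
        Finset.card_image_of_injective _ (fun a b h => by simpa using h)]
      have h1 : (Finset.univ.filter fun i : {i : Fin n // i ∈ D} => i ≠ i0).card
          = D.card - 1 := by
        rw [Finset.filter_ne', Finset.card_erase_of_mem (Finset.mem_univ _)]
        simp
      have h2 : ({Sum.inr (Sum.inr (i0, 0)), Sum.inr (Sum.inr (i0, 1))} :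
          Finset (KVert n D)).card = 2 := by
        rw [Finset.card_insert_of_notMem (by simp), Finset.card_singleton]
      have hpos : 1 ≤ D.card := Finset.card_pos.2 ⟨i₀, hi₀⟩
      rw [h1, h2]
      omega

lemma indepNum_KGraph (hn : 1 ≤ n) (hC : KCover n D W X) :
    _root_.indepNum (KGraph n D W X) = D.card + 1 := by
  have hub : ∀ k ∈ {m | ∃ s : Finset (KVert n D),
      ((↑s : Set (KVert n D)).Pairwise fun u w => ¬ (KGraph n D W X).Adj u w) ∧ s.card = m},
      k ≤ D.card + 1 := by
    rintro k ⟨s, hs, rfl⟩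
    exact card_le_of_indep hC s hs
  unfold _root_.indepNum
  apply le_antisymm
  · exact csSup_le ⟨0, ∅, by simp, by simp⟩ hub
  · obtain ⟨s, hs, hcard⟩ := exists_indep (W := W) (X := X) hn
    exact le_csSup ⟨D.card + 1, hub⟩ ⟨s, hs, hcard⟩

end Aux

lemma indepNum_mem_of_iso {V V' : Type*} [Fintype V] [Fintype V']
    {G : SimpleGraph V} {H : SimpleGraph V'} (e : G ≃g H) (k : ℕ)
    (hk : ∃ s : Finset V, ((↑s : Set V).Pairwise fun u w => ¬ G.Adj u w) ∧ s.card = k) :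
    ∃ s : Finset V', ((↑s : Set V').Pairwise fun u w => ¬ H.Adj u w) ∧ s.card = k := by
  classical
  obtain ⟨s, hs, rfl⟩ := hk
  refine ⟨s.image e, ?_, Finset.card_image_of_injective s e.injective⟩
  rintro u hu w hw hne hadj
  simp only [Finset.coe_image, Set.mem_image, Finset.mem_coe] at hu hw
  obtain ⟨a, ha, rfl⟩ := hu
  obtain ⟨b, hb, rfl⟩ := hw
  exact hs ha hb (fun h => hne (congrArg e h)) (e.map_adj_iff.1 hadj)

lemma indepNum_iso {V V' : Type*} [Fintype V] [Fintype V']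
    {G : SimpleGraph V} {H : SimpleGraph V'} (e : G ≃g H) :
    _root_.indepNum G = _root_.indepNum H := by
  unfold _root_.indepNum
  congr 1
  ext k
  exact ⟨fun h => indepNum_mem_of_iso e k h, fun h => indepNum_mem_of_iso e.symm k h⟩
/-- Any graph obtained from `K_n` (`n ≥ 3`) by 2-stretching `d` of its vertices has
independence number exactly `d + 1`. -/
theorem indepNum_of_inK {V : Type*} [Fintype V] (n d : ℕ) (hn : 3 ≤ n)
    (G : SimpleGraph V) (hG : InK n d G) :
    _root_.indepNum G = d + 1 := by
  obtain ⟨D, W, X, hd, hC, ⟨e⟩⟩ := hG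
  rw [indepNum_iso e, indepNum_KGraph (by omega) hC, hd]
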